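/- Let k be an algebraically closed field of characteristic p > 0 and let ρ: G → GL(V) be a finite-dimensional representation of a finite group G. Let H be a normal subgroup of G such that the restriction ρ|_H is adequate. If H^1(G,k) = 0 (e.g., if G/H has order prime to p), then ρ is adequate for G. -/

import Mathlib

/-- An endomorphism of a nontrivial finite-dimensional vector space over an algebraically
closed field that commutes with every endomorphism is a scalar. -/
lemma central_is_scalar {k V : Type} [Field k] [IsAlgClosed k] [AddCommGroup V] [Module k V]
    [FiniteDimensional k V] [Nontrivial V] (φ : V →ₗ[k] V)
    (h : ∀ f : V →ₗ[k] V, φ ∘ₗ f = f ∘ₗ φ) :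
    ∃ c : k, φ = c • LinearMap.id := by
  obtain ⟨c, hc⟩ := Module.End.exists_eigenvalue φ
  obtain ⟨v, hv⟩ := hc.exists_hasEigenvector
  refine ⟨c, ?_⟩
  ext x
  obtain ⟨ψ, hψ⟩ : ∃ ψ : Module.Dual k V, ψ v ≠ 0 := by
    by_contra hcon
    push_neg at hcon
    exact hv.2 ((Module.forall_dual_apply_eq_zero_iff k v).1 hcon)
  set f : V →ₗ[k] V := (ψ v)⁻¹ • ψ.smulRight x with hf
  have hfv : f v = x := by
    simp [hf, LinearMap.smulRight_apply, smul_smul, inv_mul_cancel₀ hψ]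
  have := congrArg (fun g : V →ₗ[k] V => g v) (h f)
  simp only [LinearMap.comp_apply] at this
  have hφv : φ v = c • v := hv.apply_eq_smul
  calc φ x = φ (f v) := by rw [hfv]
    _ = f (φ v) := this
    _ = c • f v := by rw [hφv, map_smul]
    _ = (c • LinearMap.id : V →ₗ[k] V) x := by rw [hfv]; rfl

lemma subsingleton_H1_iff' {k G : Type} [CommRing k] [Group G] (A : Rep k G) :
    Subsingleton (groupCohomology.H1 A) ↔
      ∀ f : groupCohomology.cocycles₁ A, (f : G → A) ∈ groupCohomology.coboundaries₁ A := by
  constructor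
  · intro h f
    rw [← groupCohomology.H1π_eq_zero_iff]
    exact Subsingleton.elim _ _
  · intro h
    have h0 : ∀ a : groupCohomology.H1 A, a = 0 := by
      intro a
      induction a using groupCohomology.H1_induction_on with
      | h x => exact (groupCohomology.H1π_eq_zero_iff x).2 (h x)
    exact ⟨fun a b => by rw [h0 a, h0 b]⟩

lemma mem_coboundaries₁_iff' {k G : Type} [CommRing k] [Group G] {A : Rep k G} (f : G → A) :
    f ∈ groupCohomology.coboundaries₁ A ↔ ∃ x : A, ∀ g : G, A.ρ g x - x = f g := by
  constructor
  · rintro ⟨x, rfl⟩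
    exact ⟨x, fun g => rfl⟩
  · rintro ⟨x, hx⟩
    exact ⟨x, funext fun g => hx g⟩

/-- A representation `ρ : G → GL(V)` over a field `k` of characteristic `p` is *adequate* if
(A1) `p ∤ dim V`, (A2) `H¹(G,k) = 0`, (A3) `Ext¹_G(V,V) ≅ H¹(G, V* ⊗ V) = 0`, and (A4) the
linear span of the semisimple elements of `ρ(G)` is all of `End(V)`. -/
def Adequate {k G V : Type} [Field k] [Group G] [AddCommGroup V] [Module k V]
    [FiniteDimensional k V] (p : ℕ) (ρ : Representation k G V) : Prop :=
  (¬ p ∣ Module.finrank k V) ∧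
  Subsingleton (groupCohomology.H1 (Rep.trivial k G k)) ∧
  Subsingleton (groupCohomology.H1 (Rep.of (ρ.linHom ρ))) ∧
  Submodule.span k {f : V →ₗ[k] V | ∃ g : G, ρ g = f ∧ Module.End.IsSemisimple f} = ⊤

/-- If `H ◁ G`, the restriction of `ρ` to `H` is adequate, and `H¹(G,k) = 0` (e.g. if `G/H`
has order prime to `p`), then `ρ` is adequate for `G`. -/
theorem stmt5 {k : Type} [Field k] [IsAlgClosed k] {p : ℕ} [Fact p.Prime] [CharP k p]
    {G : Type} [Group G] [Finite G] (H : Subgroup G) [H.Normal]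
    {V : Type} [AddCommGroup V] [Module k V] [FiniteDimensional k V]
    (ρ : Representation k G V)
    (hH : Adequate p (ρ.comp H.subtype))
    (h1 : Subsingleton (groupCohomology.H1 (Rep.trivial k G k))) :
    Adequate p ρ := by
  obtain ⟨hA1, -, hA3, hA4⟩ := hH
  -- V is nontrivial since p ∤ finrank
  have hrank : Module.finrank k V ≠ 0 := fun h => hA1 (h ▸ dvd_zero p)
  have : Nontrivial V := (Module.finrank_pos_iff (R := k)).1 (Nat.pos_of_ne_zero hrank)
  refine ⟨hA1, h1, ?_, ?_⟩
  · -- (A3)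
    set A : Rep k G := Rep.of (ρ.linHom ρ) with hA
    set AH : Rep k ↥H := Rep.of (Representation.linHom (ρ.comp H.subtype) (ρ.comp H.subtype)) with hAH
    rw [subsingleton_H1_iff']
    intro f
    have hf := (groupCohomology.mem_cocycles₁_iff (A := A) f.1).1 f.2
    -- work with an explicitly-typed copy of f
    set F : G → (V →ₗ[k] V) := fun g => show V →ₗ[k] V from f.1 g with hF
    have hf2 : ∀ g₁ g₂ : G, F (g₁ * g₂) = ρ g₁ ∘ₗ F g₂ ∘ₗ ρ g₁⁻¹ + F g₁ := fun g₁ g₂ => hf g₁ g₂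
    -- restrict f to H
    have hfH : (fun h : ↥H => f.1 h) ∈ groupCohomology.cocycles₁ AH := by
      rw [groupCohomology.mem_cocycles₁_iff]
      intro g h
      exact hf g h
    have hsub : Subsingleton (groupCohomology.H1 AH) := hA3
    rw [subsingleton_H1_iff'] at hsub
    have hmem := hsub ⟨_, hfH⟩
    obtain ⟨x, hx⟩ := (mem_coboundaries₁_iff' _).1 hmem
    set x' : V →ₗ[k] V := show V →ₗ[k] V from x with hx'def
    have hx2 : ∀ h : ↥H, ρ (h : G) ∘ₗ x' ∘ₗ ρ ((h : G))⁻¹ - x' = F (h : G) := fun h => hx h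
    -- the modified cocycle f' vanishes on H
    set f' : G → (V →ₗ[k] V) := fun g => F g - (ρ g ∘ₗ x' ∘ₗ ρ g⁻¹ - x') with hf'
    have hf'cocycle : ∀ g₁ g₂ : G, f' (g₁ * g₂) = ρ g₁ ∘ₗ f' g₂ ∘ₗ ρ g₁⁻¹ + f' g₁ := by
      intro g₁ g₂
      simp only [hf', hf2 g₁ g₂, mul_inv_rev, map_mul, Module.End.mul_eq_comp,
        LinearMap.comp_sub, LinearMap.sub_comp, LinearMap.comp_assoc]
      ext v
      simp only [LinearMap.sub_apply, LinearMap.add_apply, LinearMap.comp_apply]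
      abel
    have hf'H : ∀ h : ↥H, f' (h : G) = 0 := by
      intro h
      simp only [hf']
      rw [hx2 h]
      simp
    -- f' g commutes with ρ h for all h ∈ H
    have hcomm : ∀ g : G, ∀ h : ↥H, ρ (h : G) ∘ₗ f' g ∘ₗ ρ ((h : G))⁻¹ = f' g := by
      intro g h
      have e1 : f' ((h : G) * g) = ρ (h : G) ∘ₗ f' g ∘ₗ ρ ((h : G))⁻¹ := by
        rw [hf'cocycle, hf'H h, add_zero]
      have hconj : g⁻¹ * (h : G) * g ∈ H := Subgroup.Normal.conj_mem' ‹H.Normal› _ h.2 g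
      have e2 : f' ((h : G) * g) = f' g := by
        have he : (h : G) * g = g * (g⁻¹ * (h : G) * g) := by group
        rw [he, hf'cocycle, hf'H ⟨_, hconj⟩]
        simp
      rw [← e1, e2]
    have hcomm' : ∀ g : G, ∀ h : ↥H, ρ (h : G) ∘ₗ f' g = f' g ∘ₗ ρ (h : G) := by
      intro g h
      have hinv : ρ ((h : G))⁻¹ ∘ₗ ρ (h : G) = LinearMap.id := by
        rw [← Module.End.mul_eq_comp, ← map_mul, inv_mul_cancel, map_one]; rfl
      calc ρ (h : G) ∘ₗ f' g = (ρ (h : G) ∘ₗ f' g ∘ₗ ρ ((h : G))⁻¹) ∘ₗ ρ (h : G) := by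
            simp only [LinearMap.comp_assoc, hinv, LinearMap.comp_id]
        _ = f' g ∘ₗ ρ (h : G) := by rw [hcomm g h]
    -- so f' g commutes with the span of semisimple elements of ρ(H), i.e. everything
    have hcentral : ∀ g : G, ∀ ψ : V →ₗ[k] V, f' g ∘ₗ ψ = ψ ∘ₗ f' g := by
      intro g ψ
      have hψ : ψ ∈ Submodule.span k {f : V →ₗ[k] V |
          ∃ h : ↥H, (ρ.comp H.subtype) h = f ∧ Module.End.IsSemisimple f} := by
        rw [hA4]; trivial
      induction hψ using Submodule.span_induction with
      | mem φ hφ =>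
        obtain ⟨h, hh, -⟩ := hφ
        have := (hcomm' g h).symm
        rw [show ρ (h : G) = φ from hh] at this
        exact this
      | zero => simp
      | add φ₁ φ₂ _ _ ih1 ih2 => simp only [LinearMap.comp_add, LinearMap.add_comp, ih1, ih2]
      | smul c φ _ ih => simp only [LinearMap.comp_smul, LinearMap.smul_comp, ih]
    -- hence f' g is scalar
    have hscalar : ∀ g : G, ∃ c : k, f' g = c • LinearMap.id :=
      fun g => central_is_scalar (f' g) (hcentral g)
    choose c hcv using hscalar
    -- c is a cocycle for the trivial representation
    obtain ⟨v, hv⟩ := exists_ne (0 : V)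
    have hcadd : ∀ g₁ g₂ : G, c (g₁ * g₂) = c g₂ + c g₁ := by
      intro g₁ g₂
      have h1' := hf'cocycle g₁ g₂
      rw [hcv, hcv, hcv] at h1'
      have hinv : ρ g₁ ∘ₗ ρ g₁⁻¹ = LinearMap.id := by
        rw [← Module.End.mul_eq_comp, ← map_mul, mul_inv_cancel, map_one]; rfl
      simp only [LinearMap.smul_comp, LinearMap.comp_smul, LinearMap.id_comp, hinv, ← add_smul] at h1'
      have hv' := congrArg (fun φ : V →ₗ[k] V => φ v) h1'
      simp only [LinearMap.smul_apply, LinearMap.id_apply] at hv'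
      exact smul_left_injective k hv hv'
    have hctriv : c ∈ groupCohomology.cocycles₁ (Rep.trivial k G k) := by
      rw [groupCohomology.mem_cocycles₁_iff]
      intro g h
      rw [hcadd g h]
      congr 1
    -- since H¹(G,k) = 0 and coboundaries are trivial, c = 0
    have hczero : ∀ g : G, c g = 0 := by
      have h1' := h1
      rw [subsingleton_H1_iff'] at h1'
      have hmem' := h1' ⟨c, hctriv⟩
      rw [groupCohomology.coboundaries₁_eq_bot_of_isTrivial] at hmem'
      intro g
      exact congrFun ((Submodule.mem_bot k).1 hmem') g
    -- hence f' = 0 and f is a coboundary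
    rw [mem_coboundaries₁_iff']
    refine ⟨show CoeSort.coe A from x', fun g => ?_⟩
    have hz : f' g = 0 := by rw [hcv, hczero, zero_smul]
    simp only [hf'] at hz
    exact (sub_eq_zero.1 hz).symm
  · -- (A4)
    rw [eq_top_iff, ← hA4]
    apply Submodule.span_mono
    rintro φ ⟨h, hh, hss⟩
    exact ⟨(h : G), hh, hss⟩
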